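/- Run Algorithm 1 on an IMAB instance I = (f_1, …, f_k). For every N ≥ 2 and every arm i ∈ {1,…,k}: if arm i is the first arm to cross N pulls — i.e., at the time step t at which Algorithm 1 pulls arm i for the (N+1)-th time, every arm j satisfies N_j(t) ≤ N — then Rew_{f_i}(N) = OPT(I,N). -/

import Mathlib

open scoped Classical

/-- A reward function: bounded in [0,1], nondecreasing, with decreasing marginal returns. -/
def IsRewardFn (f : ℕ → ℝ) : Prop :=
  (∀ n, 0 ≤ f n) ∧ (∀ n, f n ≤ 1) ∧ Monotone f ∧
    ∀ n, 1 ≤ n → f (n + 1) - f n ≤ f n - f (n - 1)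

/-- Cumulative reward from pulling an arm with reward function `f` for `N` pulls. -/
noncomputable def Rew (f : ℕ → ℝ) (N : ℕ) : ℝ := ∑ n ∈ Finset.Icc 1 N, f n


lemma increments_antitone {f : ℕ → ℝ}
    (hf : ∀ n, 1 ≤ n → f (n + 1) - f n ≤ f n - f (n - 1)) :
    ∀ a b, 1 ≤ a → a ≤ b → f (b + 1) - f b ≤ f a - f (a - 1) := by
  intro a b ha hab
  induction b with
  | zero => omega
  | succ b ih =>
    have h2 := hf (b + 1) (by omega)
    simp only [Nat.add_sub_cancel] at h2
    rcases Nat.lt_or_ge a (b + 1) with h | h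
    · have := ih (by omega); linarith
    · have : a = b + 1 := by omega
      subst this; exact h2

lemma concave_linear_bound {f : ℕ → ℝ}
    (hf : ∀ n, 1 ≤ n → f (n + 1) - f n ≤ f n - f (n - 1))
    {c : ℕ} (hc : 1 ≤ c) (n : ℕ) :
    f (c + n) ≤ f c + (n : ℝ) * (f c - f (c - 1)) := by
  induction n with
  | zero => simp
  | succ n ih =>
    have h := increments_antitone hf c (c + n) hc (by omega)
    push_cast
    have : c + n + 1 = c + (n + 1) := by ring
    rw [this] at h
    linarith

lemma rew_ratio {f : ℕ → ℝ} (hf : Monotone f) {M N : ℕ} (h : M ≤ N) :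
    (N : ℝ) * Rew f M ≤ (M : ℝ) * Rew f N := by
  have hsplit : Rew f N = Rew f M + ∑ n ∈ Finset.Icc (M + 1) N, f n := by
    unfold Rew
    rw [← Finset.sum_union]
    · congr 1
      ext a; simp only [Finset.mem_Icc, Finset.mem_union]; omega
    · rw [Finset.disjoint_left]; intro a ha hb
      simp only [Finset.mem_Icc] at ha hb; omega
  have h1 : Rew f M ≤ (M : ℝ) * f M := by
    calc Rew f M ≤ ∑ _n ∈ Finset.Icc 1 M, f M :=
          Finset.sum_le_sum (fun n hn => hf (Finset.mem_Icc.mp hn).2)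
      _ = (M : ℝ) * f M := by
          rw [Finset.sum_const, Nat.card_Icc]; simp [nsmul_eq_mul]
  have h2 : ((N : ℝ) - M) * f M ≤ ∑ n ∈ Finset.Icc (M + 1) N, f n := by
    calc ((N : ℝ) - M) * f M = ∑ _n ∈ Finset.Icc (M + 1) N, f M := by
          rw [Finset.sum_const, Nat.card_Icc]
          have : N + 1 - (M + 1) = N - M := by omega
          rw [this, nsmul_eq_mul]
          congr 1
          push_cast [Nat.cast_sub h]; ring
      _ ≤ _ := Finset.sum_le_sum (fun n hn => hf (by
          have := (Finset.mem_Icc.mp hn).1; omega))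
  have hM : (0 : ℝ) ≤ M := Nat.cast_nonneg M
  have hNM : (0 : ℝ) ≤ (N : ℝ) - M := by
    have : (M : ℝ) ≤ N := Nat.cast_le.mpr h
    linarith
  nlinarith [hsplit]

lemma Rew_split {f : ℕ → ℝ} {M N : ℕ} (h : M ≤ N) :
    Rew f N = Rew f M + ∑ n ∈ Finset.Icc (M + 1) N, f n := by
  unfold Rew
  rw [← Finset.sum_union]
  · congr 1
    ext a; simp only [Finset.mem_Icc, Finset.mem_union]; omega
  · rw [Finset.disjoint_left]; intro a ha hb
    simp only [Finset.mem_Icc] at ha hb; omega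

lemma sum_Icc_shift (g : ℕ → ℝ) (M N : ℕ) (h : M ≤ N) :
    ∑ n ∈ Finset.Icc (M + 1) N, g n = ∑ n ∈ Finset.Icc 1 (N - M), g (M + n) := by
  have hmap : Finset.Icc (M + 1) N = (Finset.Icc 1 (N - M)).map (addLeftEmbedding M) := by
    rw [Finset.map_add_left_Icc]
    congr 1
    omega
  rw [hmap, Finset.sum_map]
  rfl

lemma getD_min_mem {α : Type*} [LinearOrder α] {s : Finset α} (hs : s.Nonempty) {d a : α}
    (h : (s.min).getD d = a) : a ∈ s := by
  have hc := Finset.coe_min' hs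
  rw [← hc] at h
  exact h ▸ s.min'_mem hs

lemma argmax_min_nonempty {k : ℕ} [NeZero k] (p : Fin k → ℝ) (C : Fin k → ℕ) :
    (Finset.univ.filter fun j : Fin k =>
      (∀ l, p l ≤ p j) ∧ ∀ l, (∀ m, p m ≤ p l) → C j ≤ C l).Nonempty := by
  have huniv : (Finset.univ : Finset (Fin k)).Nonempty := Finset.univ_nonempty
  set S := Finset.univ.filter (fun j : Fin k => ∀ l, p l ≤ p j) with hS
  have hSne : S.Nonempty := by
    obtain ⟨m, _, hm⟩ := Finset.exists_max_image Finset.univ p huniv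
    refine ⟨m, ?_⟩
    simp only [hS, Finset.mem_filter, Finset.mem_univ, true_and]
    exact fun l => hm l (Finset.mem_univ l)
  obtain ⟨m, hmS, hmin⟩ := Finset.exists_min_image S C hSne
  refine ⟨m, ?_⟩
  simp only [hS, Finset.mem_filter, Finset.mem_univ, true_and] at hmS ⊢
  exact ⟨hmS, fun l hl => hmin l (by simp only [hS, Finset.mem_filter, Finset.mem_univ, true_and]; exact hl)⟩

/-- Offline optimum: the best total reward over all allocations of `T` pulls to the `k` arms. -/
noncomputable def OPT {k : ℕ} (f : Fin k → ℕ → ℝ) (T : ℕ) : ℝ :=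
  sSup {x : ℝ | ∃ M : Fin k → ℕ, (∑ i, M i) = T ∧ x = ∑ i, Rew (f i) (M i)}

/-- The arm pulled by Algorithm 1 (Horizon-Unaware Improving Bandits) at (0-indexed) step `t`,
given the current pull counts `N`.  During the first `2 * k` steps each arm is pulled twice,
in round-robin order; afterwards the algorithm pulls an arm maximizing the optimistic estimate
`p i`, breaking ties in favor of the smallest count `N i` and then the smallest index. -/
noncomputable def alg1Pull {k : ℕ} [NeZero k] (f : Fin k → ℕ → ℝ)
    (N : Fin k → ℕ) (t : ℕ) : Fin k :=
  if t < 2 * k then ⟨t % k, Nat.mod_lt t (NeZero.pos k)⟩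
  else
    let Nstar := Finset.univ.sup N
    let p : Fin k → ℝ := fun i =>
      Rew (f i) (N i) + ∑ n ∈ Finset.Icc 1 (Nstar - N i),
        (f i (N i) + (n : ℝ) * (f i (N i) - f i (N i - 1)))
    ((Finset.univ.filter fun i : Fin k =>
        (∀ j, p j ≤ p i) ∧ ∀ j, (∀ l, p l ≤ p j) → N i ≤ N j).min).getD
      ⟨0, NeZero.pos k⟩

/-- `alg1Counts f t i` is the number of pulls of arm `i` made by Algorithm 1
during the first `t` steps on the instance `f`. -/
noncomputable def alg1Counts {k : ℕ} [NeZero k] (f : Fin k → ℕ → ℝ) : ℕ → Fin k → ℕ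
  | 0 => fun _ => 0
  | t + 1 => fun i =>
      alg1Counts f t i + if alg1Pull f (alg1Counts f t) t = i then 1 else 0

lemma alg1Counts_warmup {k : ℕ} [NeZero k] (f : Fin k → ℕ → ℝ) :
    ∀ t, t ≤ 2 * k → ∀ j : Fin k,
      alg1Counts f t j = ((Finset.range t).filter (fun s => s % k = j.val)).card := by
  intro t
  induction t with
  | zero => simp [alg1Counts]
  | succ t ih =>
    intro ht j
    have ht' : t < 2 * k := by omega
    have hpl : alg1Pull f (alg1Counts f t) t = ⟨t % k, Nat.mod_lt t (NeZero.pos k)⟩ := by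
      unfold alg1Pull; rw [if_pos ht']
    have hstep : alg1Counts f (t + 1) j
        = alg1Counts f t j + if alg1Pull f (alg1Counts f t) t = j then 1 else 0 := rfl
    rw [hstep, ih (by omega) j, Finset.range_add_one, Finset.filter_insert]
    by_cases h : t % k = j.val
    · have heq : alg1Pull f (alg1Counts f t) t = j := by rw [hpl]; exact Fin.ext h
      rw [if_pos heq, if_pos h, Finset.card_insert_of_notMem (by simp)]
    · have hne : ¬ alg1Pull f (alg1Counts f t) t = j := by
        rw [hpl]; intro hc; exact h (congrArg Fin.val hc)
      rw [if_neg hne, if_neg h, add_zero]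

lemma alg1Counts_mono {k : ℕ} [NeZero k] (f : Fin k → ℕ → ℝ) (j : Fin k) :
    Monotone (fun t => alg1Counts f t j) := by
  apply monotone_nat_of_le_succ
  intro t
  have hstep : alg1Counts f (t + 1) j
      = alg1Counts f t j + if alg1Pull f (alg1Counts f t) t = j then 1 else 0 := rfl
  rw [hstep]; exact Nat.le_add_right _ _

lemma alg1Counts_two {k : ℕ} [NeZero k] (f : Fin k → ℕ → ℝ) (j : Fin k) :
    alg1Counts f (2 * k) j = 2 := by
  rw [alg1Counts_warmup f (2 * k) le_rfl j]
  have hk := NeZero.pos k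
  have hset : (Finset.range (2 * k)).filter (fun s => s % k = j.val)
      = {j.val, k + j.val} := by
    ext s
    simp only [Finset.mem_filter, Finset.mem_range, Finset.mem_insert, Finset.mem_singleton]
    constructor
    · rintro ⟨hs, hmod⟩
      have hdm := Nat.div_add_mod s k
      have hq : s / k < 2 := by
        by_contra hq
        push_neg at hq
        have : k * 2 ≤ k * (s / k) := Nat.mul_le_mul_left k hq
        omega
      have hq01 : s / k = 0 ∨ s / k = 1 := Nat.le_one_iff_eq_zero_or_eq_one.mp (Nat.lt_succ_iff.mp hq)
      rcases hq01 with h0 | h1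
      · left; rw [h0] at hdm; omega
      · right; rw [h1] at hdm; omega
    · have hj := j.isLt
      rintro (rfl | rfl)
      · exact ⟨by omega, Nat.mod_eq_of_lt hj⟩
      · refine ⟨by omega, ?_⟩
        rw [Nat.add_mod_left]
        exact Nat.mod_eq_of_lt hj
  rw [hset]
  rw [Finset.card_insert_of_notMem (by simp; omega), Finset.card_singleton]

lemma alg1Counts_ge_two {k : ℕ} [NeZero k] (f : Fin k → ℕ → ℝ) (j : Fin k) {t : ℕ}
    (ht : 2 * k ≤ t) : 2 ≤ alg1Counts f t j := by
  have h := alg1Counts_mono f j ht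
  simp only at h
  rw [alg1Counts_two] at h
  exact h

/-- If arm `i` is the first arm that Algorithm 1 pulls for the `(N+1)`-th time (i.e., at the
step `t` where this pull happens every arm `j` has at most `N` pulls so far), then the
cumulative reward of arm `i` after `N` pulls equals the offline optimum for horizon `N`. -/
theorem first_arm_to_cross_N_pulls (k : ℕ) [NeZero k] (f : Fin k → ℕ → ℝ)
    (hf : ∀ i, IsRewardFn (f i)) (N : ℕ) (hN : 2 ≤ N) (i : Fin k) (t : ℕ)
    (hpull : alg1Pull f (alg1Counts f t) t = i)
    (hcount : alg1Counts f t i = N)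
    (hfirst : ∀ j, alg1Counts f t j ≤ N) :
    Rew (f i) N = OPT f N := by
  have hk := NeZero.pos k
  -- Step 0: we are past the warm-up phase.
  have h2k : 2 * k ≤ t := by
    by_contra hlt
    push_neg at hlt
    have hp : alg1Pull f (alg1Counts f t) t = ⟨t % k, Nat.mod_lt t (NeZero.pos k)⟩ := by
      unfold alg1Pull; rw [if_pos hlt]
    have hiv : t % k = i.val := by
      rw [hpull] at hp
      exact (congrArg Fin.val hp).symm
    have hdm := Nat.div_add_mod t k
    have hq : t / k < 2 := by
      by_contra hq
      push_neg at hq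
      have : k * 2 ≤ k * (t / k) := Nat.mul_le_mul_left k hq
      omega
    have ht' : t ≤ k + i.val := by
      rcases Nat.le_one_iff_eq_zero_or_eq_one.mp (Nat.lt_succ_iff.mp hq) with h0 | h1
      · rw [h0] at hdm; have := i.isLt; omega
      · rw [h1] at hdm; omega
    have hcw := alg1Counts_warmup f t (le_of_lt hlt) i
    have hsub : (Finset.range t).filter (fun s => s % k = i.val) ⊆ {i.val} := by
      intro s hs
      simp only [Finset.mem_filter, Finset.mem_range] at hs
      simp only [Finset.mem_singleton]
      obtain ⟨hst, hsm⟩ := hs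
      have hdm2 := Nat.div_add_mod s k
      have hq2 : s / k = 0 := by
        by_contra hq2
        have h1 : 1 ≤ s / k := Nat.one_le_iff_ne_zero.mpr hq2
        have : k * 1 ≤ k * (s / k) := Nat.mul_le_mul_left k h1
        omega
      rw [hq2] at hdm2; omega
    have hle := Finset.card_le_card hsub
    rw [← hcw, hcount] at hle
    simp only [Finset.card_singleton] at hle
    omega
  have hnot : ¬ t < 2 * k := not_lt.mpr h2k
  set C := alg1Counts f t with hC
  have hCi : C i = N := hcount
  have hNstar : Finset.univ.sup C = N := by
    apply le_antisymm
    · exact Finset.sup_le (fun j _ => hfirst j)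
    · exact hCi ▸ Finset.le_sup (Finset.mem_univ i)
  set P : Fin k → ℝ := fun j =>
    Rew (f j) (C j) + ∑ n ∈ Finset.Icc 1 (Finset.univ.sup C - C j),
      (f j (C j) + (n : ℝ) * (f j (C j) - f j (C j - 1))) with hP
  have hpull' : ((Finset.univ.filter fun j : Fin k =>
      (∀ l, P l ≤ P j) ∧ ∀ l, (∀ m, P m ≤ P l) → C j ≤ C l).min).getD ⟨0, NeZero.pos k⟩
      = i := by
    rw [hP]
    unfold alg1Pull at hpull
    rw [if_neg hnot] at hpull
    exact hpull
  have hi := getD_min_mem (argmax_min_nonempty P C) hpull'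
  rw [Finset.mem_filter] at hi
  have hmax : ∀ j, P j ≤ P i := hi.2.1
  have hPi : P i = Rew (f i) N := by
    simp only [hP, hNstar, hCi, Nat.sub_self]
    rw [Finset.Icc_eq_empty (by omega), Finset.sum_empty, add_zero]
  have hC1 : ∀ j, 1 ≤ C j := fun j => le_trans one_le_two (alg1Counts_ge_two f j h2k)
  have hPj : ∀ j, Rew (f j) N ≤ P j := by
    intro j
    obtain ⟨h0, h1, hmono, hconc⟩ := hf j
    have hCjN : C j ≤ N := hfirst j
    rw [Rew_split hCjN, sum_Icc_shift (f j) (C j) N hCjN]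
    simp only [hP, hNstar]
    apply add_le_add_right
    apply Finset.sum_le_sum
    intro n _
    exact concave_linear_bound hconc (hC1 j) n
  have hbest : ∀ j, Rew (f j) N ≤ Rew (f i) N := fun j => hPi ▸ le_trans (hPj j) (hmax j)
  have hNpos : (0 : ℝ) < N := by
    have : (0 : ℕ) < N := by omega
    exact_mod_cast this
  symm
  apply IsGreatest.csSup_eq
  constructor
  · refine ⟨fun j => if j = i then N else 0, ?_, ?_⟩
    · simp
    · have hterm : ∀ j, Rew (f j) (if j = i then N else 0) = if j = i then Rew (f i) N else 0 := by
        intro j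
        by_cases h : j = i
        · simp [h]
        · simp [h, Rew]
      rw [Finset.sum_congr rfl (fun j _ => hterm j)]
      simp
  · rintro x ⟨M, hMsum, rfl⟩
    have key : ∀ j, Rew (f j) (M j) ≤ (M j : ℝ) / N * Rew (f i) N := by
      intro j
      obtain ⟨h0, h1, hmono, hconc⟩ := hf j
      have hMj : M j ≤ N := by
        rw [← hMsum]
        exact Finset.single_le_sum (fun _ _ => Nat.zero_le _) (Finset.mem_univ j)
      have hr := rew_ratio hmono hMj
      have h2' : (M j : ℝ) * Rew (f j) N ≤ (M j : ℝ) * Rew (f i) N :=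
        mul_le_mul_of_nonneg_left (hbest j) (Nat.cast_nonneg _)
      rw [div_mul_eq_mul_div, le_div_iff₀ hNpos]
      linarith
    calc (∑ j, Rew (f j) (M j)) ≤ ∑ j, (M j : ℝ) / N * Rew (f i) N :=
        Finset.sum_le_sum fun j _ => key j
      _ = Rew (f i) N := by
        rw [← Finset.sum_mul, ← Finset.sum_div]
        have hcast : (∑ j, (M j : ℝ)) = (N : ℝ) := by
          rw [← Nat.cast_sum, hMsum]
        rw [hcast, div_self (ne_of_gt hNpos), one_mul]
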